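/- For every k ∈ (0, 1) one has f₄(k) := E(k)² − (1 − k²)·K(k)² > 0; equivalently, E(k) > √(1 − k²)·K(k). -/

import Mathlib

open Set Real

/-- Complete elliptic integral of the first kind. -/
noncomputable def ellK (k : ℝ) : ℝ :=
  ∫ t in (0:ℝ)..(π/2), 1 / Real.sqrt (1 - k ^ 2 * sin t ^ 2)

/-- Complete elliptic integral of the second kind. -/
noncomputable def ellE (k : ℝ) : ℝ :=
  ∫ t in (0:ℝ)..(π/2), Real.sqrt (1 - k ^ 2 * sin t ^ 2)

/-- Lemma: `f₄(k) = E(k)² − (1 − k²)K(k)² > 0`, i.e. `E(k) > √(1−k²)·K(k)`,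
for `k ∈ (0,1)`. -/
theorem f4_pos :
    ∀ k ∈ Ioo (0:ℝ) 1,
      0 < ellE k ^ 2 - (1 - k ^ 2) * ellK k ^ 2 ∧
      Real.sqrt (1 - k ^ 2) * ellK k < ellE k := by
  rintro k ⟨hk0, hk1⟩
  have hk2 : k ^ 2 < 1 := by nlinarith
  have ha : ∀ t : ℝ, 0 < 1 - k ^ 2 * sin t ^ 2 := by
    intro t
    nlinarith [sin_sq_le_one t, sq_nonneg k]
  have hb : ∀ t : ℝ, 0 < 1 - k ^ 2 * cos t ^ 2 := by
    intro t
    nlinarith [cos_sq_le_one t, sq_nonneg k]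
  set c : ℝ := Real.sqrt (1 - k ^ 2) with hc
  -- continuity facts
  have hcontA : Continuous fun t : ℝ => Real.sqrt (1 - k ^ 2 * sin t ^ 2) :=
    Real.continuous_sqrt.comp (by continuity)
  have hcontB : Continuous fun t : ℝ => Real.sqrt (1 - k ^ 2 * cos t ^ 2) :=
    Real.continuous_sqrt.comp (by continuity)
  have hAne : ∀ t : ℝ, Real.sqrt (1 - k ^ 2 * sin t ^ 2) ≠ 0 := fun t =>
    (Real.sqrt_pos.2 (ha t)).ne'
  have hBne : ∀ t : ℝ, Real.sqrt (1 - k ^ 2 * cos t ^ 2) ≠ 0 := fun t =>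
    (Real.sqrt_pos.2 (hb t)).ne'
  have hcontA' : Continuous fun t : ℝ => 1 / Real.sqrt (1 - k ^ 2 * sin t ^ 2) :=
    continuous_const.div hcontA hAne
  have hcontB' : Continuous fun t : ℝ => 1 / Real.sqrt (1 - k ^ 2 * cos t ^ 2) :=
    continuous_const.div hcontB hBne
  -- reflection identities
  have hrefl : ∀ f : ℝ → ℝ,
      (∫ t in (0:ℝ)..(π/2), f (π/2 - t)) = ∫ t in (0:ℝ)..(π/2), f t := by
    intro f
    rw [intervalIntegral.integral_comp_sub_left f (π/2)]
    norm_num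
  have hE' : (∫ t in (0:ℝ)..(π/2), Real.sqrt (1 - k ^ 2 * cos t ^ 2)) = ellE k := by
    rw [ellE, ← hrefl (fun t => Real.sqrt (1 - k ^ 2 * sin t ^ 2))]
    simp [Real.sin_pi_div_two_sub]
  have hK' : (∫ t in (0:ℝ)..(π/2), 1 / Real.sqrt (1 - k ^ 2 * cos t ^ 2)) = ellK k := by
    rw [ellK, ← hrefl (fun t => 1 / Real.sqrt (1 - k ^ 2 * sin t ^ 2))]
    simp [Real.sin_pi_div_two_sub]
  -- the key integrand
  set F : ℝ → ℝ := fun t =>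
    (Real.sqrt (1 - k ^ 2 * sin t ^ 2) + Real.sqrt (1 - k ^ 2 * cos t ^ 2)) -
      (c * (1 / Real.sqrt (1 - k ^ 2 * sin t ^ 2)) +
        c * (1 / Real.sqrt (1 - k ^ 2 * cos t ^ 2))) with hF
  have hFcont : Continuous F := by
    apply Continuous.sub (hcontA.add hcontB)
    exact (continuous_const.mul hcontA').add (continuous_const.mul hcontB')
  have hFpos : ∀ t ∈ Ioo (0:ℝ) (π/2), 0 < F t := by
    rintro t ⟨ht0, ht1⟩
    have hs : 0 < sin t := Real.sin_pos_of_pos_of_lt_pi ht0 (by linarith [pi_pos])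
    have hcos : 0 < cos t := Real.cos_pos_of_mem_Ioo ⟨by linarith [pi_pos], ht1⟩
    set sa := Real.sqrt (1 - k ^ 2 * sin t ^ 2) with hsa
    set sb := Real.sqrt (1 - k ^ 2 * cos t ^ 2) with hsb
    have hsa0 : 0 < sa := Real.sqrt_pos.2 (ha t)
    have hsb0 : 0 < sb := Real.sqrt_pos.2 (hb t)
    have hprod : c < sa * sb := by
      rw [hsa, hsb, ← Real.sqrt_mul (ha t).le, hc]
      apply Real.sqrt_lt_sqrt (by nlinarith)
      have hsc : sin t ^ 2 + cos t ^ 2 = 1 := sin_sq_add_cos_sq t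
      nlinarith [mul_pos (mul_pos hs hcos) (mul_pos hs hcos), sq_nonneg k, pow_pos hk0 4]
    have h1 : c * (1 / sa) < sb := by
      rw [mul_one_div, div_lt_iff₀ hsa0]
      linarith [mul_comm sa sb]
    have h2 : c * (1 / sb) < sa := by
      rw [mul_one_div, div_lt_iff₀ hsb0]
      linarith
    simp only [hF]
    rw [← hsa, ← hsb]
    linarith
  have hint : 0 < ∫ t in (0:ℝ)..(π/2), F t := by
    apply intervalIntegral.intervalIntegral_pos_of_pos_on
      (hFcont.intervalIntegrable 0 (π/2)) hFpos
    positivity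
  have hcalc : (∫ t in (0:ℝ)..(π/2), F t)
      = 2 * ellE k - 2 * (c * ellK k) := by
    rw [hF]
    rw [intervalIntegral.integral_sub
      ((hcontA.fun_add hcontB).intervalIntegrable 0 (π/2))
      (((continuous_const.fun_mul hcontA').fun_add (continuous_const.fun_mul hcontB')).intervalIntegrable 0 (π/2)),
      intervalIntegral.integral_add (hcontA.intervalIntegrable 0 (π/2))
        (hcontB.intervalIntegrable 0 (π/2)),
      intervalIntegral.integral_add ((continuous_const.fun_mul hcontA').intervalIntegrable 0 (π/2))
        ((continuous_const.fun_mul hcontB').intervalIntegrable 0 (π/2)),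
      intervalIntegral.integral_const_mul, intervalIntegral.integral_const_mul,
      hE', hK']
    rw [show (∫ t in (0:ℝ)..(π/2), Real.sqrt (1 - k ^ 2 * sin t ^ 2)) = ellE k from rfl,
      show (∫ t in (0:ℝ)..(π/2), 1 / Real.sqrt (1 - k ^ 2 * sin t ^ 2)) = ellK k from rfl]
    ring
  rw [hcalc] at hint
  have hmain : c * ellK k < ellE k := by linarith
  refine ⟨?_, hmain⟩
  have hK0 : 0 ≤ ellK k := by
    apply intervalIntegral.integral_nonneg (by positivity)
    intro t _
    positivity
  have hcK : 0 ≤ c * ellK k := mul_nonneg (Real.sqrt_nonneg _) hK0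
  have hE0 : 0 < ellE k := lt_of_le_of_lt hcK hmain
  have hcsq : c ^ 2 = 1 - k ^ 2 := Real.sq_sqrt (by linarith)
  nlinarith [hmain, hcK, hE0]
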